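/- Let φ be a vector-valued modular form of weight α with respect to a representation ρ of Γ on ℂⁿ, and ψ a vector-valued modular form of weight β with respect to the contragredient ρ*, with α, β ≥ 0. For a nonnegative integer w, the scalar-valued function [[φ, ψ]]_w^{(α,β)}(z) = Σ_{r=0}^{w} (−1)^r C(α+w−1, w−r) C(β+w−1, r) ᵗ(φ^{(r)}(z)) ψ^{(w−r)}(z) is a (scalar) modular form of weight α+β+2w for Γ. -/

import Mathlib

open Matrix Complex Finset

abbrev SL2R := Matrix.SpecialLinearGroup (Fin 2) ℝ

noncomputable def Jf (γ : SL2R) (z : ℂ) : ℂ := (γ.1 1 0 : ℝ) * z + (γ.1 1 1 : ℝ)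

noncomputable def actSL (γ : SL2R) (z : ℂ) : ℂ :=
  ((γ.1 0 0 : ℝ) * z + (γ.1 0 1 : ℝ)) / Jf γ z

/-- Generalized binomial coefficient C(a, r) = a(a−1)⋯(a−r+1)/r! for a ∈ ℤ. -/
noncomputable def gchoose (a : ℤ) (r : ℕ) : ℂ :=
  (∏ i ∈ Finset.range r, ((a : ℂ) - (i : ℂ))) / (r.factorial : ℂ)

/-- Vector-valued modular form of weight k for Γ with respect to a real
representation ρ. -/
def IsVVMF {ι : Type} [Fintype ι] (Γ : Subgroup SL2R)
    (ρ : SL2R → Matrix ι ι ℝ) (k : ℤ) (f : ℂ → ι → ℂ) : Prop :=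
  DifferentiableOn ℂ f {z : ℂ | 0 < z.im} ∧
    ∀ γ ∈ Γ, ∀ z : ℂ, 0 < z.im →
      f (actSL γ z) = Jf γ z ^ k • ((ρ γ).map Complex.ofReal *ᵥ f z)

/-- Scalar modular form of weight k for Γ. -/
def IsMF (Γ : Subgroup SL2R) (k : ℤ) (f : ℂ → ℂ) : Prop :=
  DifferentiableOn ℂ f {z : ℂ | 0 < z.im} ∧
    ∀ γ ∈ Γ, ∀ z : ℂ, 0 < z.im → f (actSL γ z) = Jf γ z ^ k * f z

lemma isOpen_H : IsOpen {z : ℂ | 0 < z.im} := isOpen_lt continuous_const Complex.continuous_im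

lemma det_entries (γ : SL2R) :
    (γ.1 0 0 : ℝ) * γ.1 1 1 - γ.1 0 1 * γ.1 1 0 = 1 := by
  have := γ.2
  rw [Matrix.det_fin_two] at this
  linarith

lemma Jf_ne_zero (γ : SL2R) {z : ℂ} (hz : 0 < z.im) : Jf γ z ≠ 0 := by
  intro h
  have h1 : (γ.1 1 0 : ℝ) * z.im = 0 := by
    have := congrArg Complex.im h
    simpa [Jf] using this
  have hc : (γ.1 1 0 : ℝ) = 0 := by
    rcases mul_eq_zero.mp h1 with h' | h'
    · exact h'
    · exact absurd h' (ne_of_gt hz)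
  have h2 : (γ.1 1 0 : ℝ) * z.re + γ.1 1 1 = 0 := by
    have := congrArg Complex.re h
    simpa [Jf] using this
  have hd : (γ.1 1 1 : ℝ) = 0 := by rw [hc] at h2; linarith
  have := det_entries γ
  rw [hc, hd] at this
  simp at this

lemma actSL_mem (γ : SL2R) {z : ℂ} (hz : 0 < z.im) : 0 < (actSL γ z).im := by
  have hJ := Jf_ne_zero γ hz
  have hnormSq : 0 < Complex.normSq (Jf γ z) := by
    rwa [Complex.normSq_pos]
  have him : (actSL γ z).im = z.im / Complex.normSq (Jf γ z) := by
    rw [actSL, Complex.div_im]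
    have h1 : ((γ.1 0 0 : ℝ) * z + (γ.1 0 1 : ℝ)).im = (γ.1 0 0 : ℝ) * z.im := by simp
    have h2 : ((γ.1 0 0 : ℝ) * z + (γ.1 0 1 : ℝ)).re = (γ.1 0 0 : ℝ) * z.re + γ.1 0 1 := by simp
    have h3 : (Jf γ z).im = (γ.1 1 0 : ℝ) * z.im := by simp [Jf]
    have h4 : (Jf γ z).re = (γ.1 1 0 : ℝ) * z.re + γ.1 1 1 := by simp [Jf]
    rw [h1, h2, h3, h4]
    have hdet := det_entries γ
    field_simp
    ring_nf
    nlinarith [hdet, hz]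
  rw [him]
  positivity

lemma hasDerivAt_Jf (γ : SL2R) (z : ℂ) :
    HasDerivAt (Jf γ) ((γ.1 1 0 : ℝ) : ℂ) z := by
  show HasDerivAt (fun z : ℂ => ((γ.1 1 0 : ℝ) : ℂ) * z + ((γ.1 1 1 : ℝ) : ℂ)) _ z
  simpa using ((hasDerivAt_id z).const_mul ((γ.1 1 0 : ℝ) : ℂ)).add_const ((γ.1 1 1 : ℝ) : ℂ)

lemma hasDerivAt_actSL (γ : SL2R) {z : ℂ} (hz : 0 < z.im) :
    HasDerivAt (actSL γ) (((Jf γ z) ^ 2)⁻¹) z := by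
  have hJ := Jf_ne_zero γ hz
  have hnum : HasDerivAt (fun z : ℂ => (γ.1 0 0 : ℝ) * z + (γ.1 0 1 : ℝ))
      ((γ.1 0 0 : ℝ) : ℂ) z := by
    simpa using ((hasDerivAt_id z).const_mul ((γ.1 0 0 : ℝ) : ℂ)).add_const ((γ.1 0 1 : ℝ) : ℂ)
  have h := hnum.div (hasDerivAt_Jf γ z) hJ
  refine h.congr_deriv ?_
  have hdetC : ((γ.1 0 0 : ℝ) : ℂ) * ((γ.1 1 1 : ℝ) : ℂ) - ((γ.1 0 1 : ℝ) : ℂ) * ((γ.1 1 0 : ℝ) : ℂ) = 1 := by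
    exact_mod_cast det_entries γ
  have hnum1 : ((γ.1 0 0 : ℝ) : ℂ) * Jf γ z - (((γ.1 0 0 : ℝ) : ℂ) * z + ((γ.1 0 1 : ℝ) : ℂ)) * ((γ.1 1 0 : ℝ) : ℂ) = 1 := by
    rw [Jf]; linear_combination hdetC
  rw [hnum1, one_div]


variable {n : ℕ}


variable {n : ℕ}

lemma iter_analytic {f : ℂ → Fin n → ℂ} (hf : DifferentiableOn ℂ f {z : ℂ | 0 < z.im}) (r : ℕ) :
    AnalyticOnNhd ℂ (iteratedDeriv r f) {z : ℂ | 0 < z.im} := by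
  induction r with
  | zero => simpa using hf.analyticOnNhd isOpen_H
  | succ r ih => rw [iteratedDeriv_succ]; exact ih.deriv

lemma iter_hasDerivAt {f : ℂ → Fin n → ℂ} (hf : DifferentiableOn ℂ f {z : ℂ | 0 < z.im})
    (r : ℕ) {z : ℂ} (hz : 0 < z.im) :
    HasDerivAt (iteratedDeriv r f) (iteratedDeriv (r + 1) f z) z := by
  have h := (iter_analytic hf r z hz).differentiableAt
  have := h.hasDerivAt
  rwa [← iteratedDeriv_succ] at this


/-- coefficient in the transformation law of iterated derivatives -/
noncomputable def Ac (k : ℕ) (r j : ℕ) : ℂ :=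
  (r.choose j : ℂ) * ∏ i ∈ Finset.Ico j r, ((k : ℂ) + i)

lemma Ac_self (k r : ℕ) : Ac k r r = 1 := by simp [Ac]

lemma Ac_zero_of_lt (k : ℕ) {r j : ℕ} (h : r < j) : Ac k r j = 0 := by
  simp [Ac, Nat.choose_eq_zero_of_lt h]

lemma Ac_succ_zero (k r : ℕ) : Ac k (r + 1) 0 = ((k : ℂ) + r) * Ac k r 0 := by
  simp only [Ac, Nat.choose_zero_right, Nat.cast_one, one_mul]
  rw [Finset.prod_Ico_succ_top (Nat.zero_le _)]
  ring

lemma Ac_rec (k r j : ℕ) :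
    Ac k (r + 1) (j + 1) = ((k : ℂ) + r + j + 1) * Ac k r (j + 1) + Ac k r j := by
  rcases lt_or_ge r j with h | h
  · rw [Ac_zero_of_lt k (by omega), Ac_zero_of_lt k (by omega), Ac_zero_of_lt k h]
    ring
  rcases eq_or_lt_of_le h with rfl | hlt
  · rw [Ac_self, Ac_self, Ac_zero_of_lt k (by omega)]
    ring
  · -- j < r
    have hchoose : ((r + 1).choose (j + 1) : ℂ) = (r.choose (j + 1) : ℂ) + (r.choose j : ℂ) := by
      push_cast [Nat.choose_succ_succ]
      ring
    have htop : ∏ i ∈ Finset.Ico (j + 1) (r + 1), ((k : ℂ) + i)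
        = (∏ i ∈ Finset.Ico (j + 1) r, ((k : ℂ) + i)) * ((k : ℂ) + r) :=
      Finset.prod_Ico_succ_top (by omega) _
    have hbot : ∏ i ∈ Finset.Ico j r, ((k : ℂ) + i)
        = ((k : ℂ) + j) * ∏ i ∈ Finset.Ico (j + 1) r, ((k : ℂ) + i) :=
      Finset.prod_eq_prod_Ico_succ_bot hlt _
    have hkey : ((r : ℂ) - j) * (r.choose j : ℂ) = ((j : ℂ) + 1) * (r.choose (j + 1) : ℂ) := by
      have h0 := Nat.choose_succ_right_eq r j
      have hc := congrArg (fun x : ℕ => (x : ℂ)) h0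
      push_cast [Nat.cast_sub hlt.le] at hc
      linear_combination -hc
    rw [Ac, Ac, Ac, htop, hbot, hchoose]
    set P := ∏ i ∈ Finset.Ico (j + 1) r, ((k : ℂ) + i) with hP
    linear_combination P * hkey

lemma deriv_transform (γ : SL2R) (k : ℕ) (Q : Matrix (Fin n) (Fin n) ℂ)
    (f : ℂ → Fin n → ℂ) (hf : DifferentiableOn ℂ f {z : ℂ | 0 < z.im})
    (hf2 : ∀ z : ℂ, 0 < z.im → f (actSL γ z) = Jf γ z ^ k • (Q *ᵥ f z)) (r : ℕ) :
    ∀ z : ℂ, 0 < z.im → iteratedDeriv r f (actSL γ z)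
      = ∑ j ∈ Finset.range (r + 1),
          (Ac k r j * ((γ.1 1 0 : ℝ) : ℂ) ^ (r - j) * Jf γ z ^ (k + r + j)) •
            (Q *ᵥ iteratedDeriv j f z) := by
  induction r with
  | zero =>
    intro z hz
    simpa [Ac] using hf2 z hz
  | succ r ih =>
    intro z hz
    have hJ := Jf_ne_zero γ hz
    set c : ℂ := ((γ.1 1 0 : ℝ) : ℂ) with hc
    set v : ℕ → Fin n → ℂ := fun j => Q *ᵥ iteratedDeriv j f z with hv
    -- derivative of LHS function
    have hL : HasDerivAt (fun x => iteratedDeriv r f (actSL γ x))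
        (((Jf γ z) ^ 2)⁻¹ • iteratedDeriv (r + 1) f (actSL γ z)) z := by
      have h1 := iter_hasDerivAt hf r (actSL_mem γ hz)
      have := h1.scomp z (hasDerivAt_actSL γ hz)
      exact this
    -- derivative of each RHS term
    have hterm : ∀ j, 0 < z.im → HasDerivAt
        (fun x => (Ac k r j * c ^ (r - j) * Jf γ x ^ (k + r + j)) • (Q *ᵥ iteratedDeriv j f x))
        ((Ac k r j * c ^ (r - j) * Jf γ z ^ (k + r + j)) • v (j + 1)
          + (Ac k r j * c ^ (r - j) * (((k + r + j : ℕ) : ℂ) * Jf γ z ^ (k + r + j - 1) * c)) • v j)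
        z := by
      intro j _
      have hs : HasDerivAt (fun x => Ac k r j * c ^ (r - j) * Jf γ x ^ (k + r + j))
          (Ac k r j * c ^ (r - j) * (((k + r + j : ℕ) : ℂ) * Jf γ z ^ (k + r + j - 1) * c)) z :=
        ((hasDerivAt_Jf γ z).pow _).const_mul _
      have hvd : HasDerivAt (fun x => Q *ᵥ iteratedDeriv j f x) (v (j + 1)) z := by
        rw [hasDerivAt_pi]
        intro i
        have hcomp := (hasDerivAt_pi).1 (iter_hasDerivAt hf j hz)
        simpa [hv, Matrix.mulVec, dotProduct] using
          HasDerivAt.fun_sum (fun l (_ : l ∈ Finset.univ) => ((hcomp l).const_mul (Q i l)))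
      exact hs.smul hvd
    -- derivative of RHS sum
    have hR : HasDerivAt
        (fun x => ∑ j ∈ Finset.range (r + 1),
          (Ac k r j * c ^ (r - j) * Jf γ x ^ (k + r + j)) • (Q *ᵥ iteratedDeriv j f x))
        (∑ j ∈ Finset.range (r + 1),
          ((Ac k r j * c ^ (r - j) * Jf γ z ^ (k + r + j)) • v (j + 1)
          + (Ac k r j * c ^ (r - j) * (((k + r + j : ℕ) : ℂ) * Jf γ z ^ (k + r + j - 1) * c)) • v j))
        z := HasDerivAt.fun_sum (fun j _ => hterm j hz)
    -- the two functions agree near z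
    have hEq : (fun x => iteratedDeriv r f (actSL γ x)) =ᶠ[nhds z]
        (fun x => ∑ j ∈ Finset.range (r + 1),
          (Ac k r j * c ^ (r - j) * Jf γ x ^ (k + r + j)) • (Q *ᵥ iteratedDeriv j f x)) := by
      filter_upwards [isOpen_H.mem_nhds hz] with x hx using ih x hx
    have hL' := hR.congr_of_eventuallyEq hEq
    have hder := hL.unique hL'
    -- multiply by J^2
    have hmain : iteratedDeriv (r + 1) f (actSL γ z)
        = (Jf γ z ^ 2) • ∑ j ∈ Finset.range (r + 1),
          ((Ac k r j * c ^ (r - j) * Jf γ z ^ (k + r + j)) • v (j + 1)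
          + (Ac k r j * c ^ (r - j) * (((k + r + j : ℕ) : ℂ) * Jf γ z ^ (k + r + j - 1) * c)) • v j) := by
      rw [← hder, smul_smul, mul_inv_cancel₀ (pow_ne_zero 2 hJ), one_smul]
    rw [hmain]
    rw [Finset.smul_sum]
    have hterm2 : ∀ j ∈ Finset.range (r + 1),
        (Jf γ z ^ 2) • ((Ac k r j * c ^ (r - j) * Jf γ z ^ (k + r + j)) • v (j + 1)
          + (Ac k r j * c ^ (r - j) * (((k + r + j : ℕ) : ℂ) * Jf γ z ^ (k + r + j - 1) * c)) • v j)
        = (Ac k r j * c ^ (r - j) * Jf γ z ^ (k + r + j + 2)) • v (j + 1)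
          + (((k + r + j : ℕ) : ℂ) * Ac k r j * (c ^ (r - j) * c) * Jf γ z ^ (k + r + j + 1)) • v j := by
      intro j _
      rw [smul_add, smul_smul, smul_smul]
      congr 1
      · congr 1
        rw [pow_add]
        ring
      · congr 1
        rcases Nat.eq_zero_or_pos (k + r + j) with h0 | h0
        · simp [h0]
        · have hexp : k + r + j - 1 + 2 = k + r + j + 1 := by omega
          rw [← hexp, pow_add]
          ring
    rw [Finset.sum_congr rfl hterm2, Finset.sum_add_distrib]
    have halpha : ∑ j ∈ Finset.range (r + 1),
        (((k + r + j : ℕ) : ℂ) * Ac k r j * (c ^ (r - j) * c) * Jf γ z ^ (k + r + j + 1)) • v j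
        = (∑ j ∈ Finset.range (r + 1),
            (((k + r + (j + 1) : ℕ) : ℂ) * Ac k r (j + 1) * (c ^ (r - (j + 1)) * c) *
              Jf γ z ^ (k + r + (j + 1) + 1)) • v (j + 1))
          + (((k + r + 0 : ℕ) : ℂ) * Ac k r 0 * (c ^ (r - 0) * c) * Jf γ z ^ (k + r + 0 + 1)) • v 0 := by
      rw [Finset.sum_range_succ']
      congr 1
      rw [Finset.sum_range_succ, Ac_zero_of_lt k (Nat.lt_succ_self r)]
      simp
    rw [halpha]
    have hfold : ∀ j, Q *ᵥ iteratedDeriv j f z = v j := fun _ => rfl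
    simp only [hfold]
    conv_rhs => rw [Finset.sum_range_succ']
    rw [← add_assoc, ← Finset.sum_add_distrib]
    congr 1
    · apply Finset.sum_congr rfl
      intro j hj
      have hjr : j ≤ r := by
        have := Finset.mem_range.mp hj; omega
      rw [← add_smul]
      congr 1
      rw [Ac_rec]
      have hc1 : r + 1 - (j + 1) = r - j := by omega
      have he1 : k + (r + 1) + (j + 1) = k + r + j + 2 := by omega
      rw [hc1, he1]
      rcases eq_or_lt_of_le hjr with rfl | hlt
      · rw [Ac_zero_of_lt k (by omega : j < j + 1)]
        push_cast
        ring
      · have hc2 : c ^ (r - (j + 1)) * c = c ^ (r - j) := by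
          rw [← pow_succ]
          congr 1
          omega
        have he2 : k + r + (j + 1) + 1 = k + r + j + 2 := by omega
        rw [hc2, he2]
        push_cast
        ring
    · congr 1
      rw [Ac_succ_zero]
      have hc3 : c ^ (r + 1 - 0) = c ^ (r - 0) * c := by
        rw [← pow_succ]
        norm_num
      rw [hc3]
      push_cast
      ring


/-- big constant independent of t -/
noncomputable def Kbig (a b j m N : ℕ) : ℂ :=
  (∏ i ∈ Finset.range m, ((a : ℂ) + (j + m + N : ℕ) - 1 - i)) *
  (∏ i ∈ Finset.range j, ((b : ℂ) + (j + m + N : ℕ) - 1 - i)) *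
  (∏ i ∈ Finset.Ico j (j + N), ((a : ℂ) + i)) *
  (∏ i ∈ Finset.Ico m (m + N), ((b : ℂ) + i)) /
  ((j.factorial : ℂ) * (m.factorial : ℂ) * (N.factorial : ℂ))

lemma keyP (a b j m N t : ℕ) (ht : t ≤ N) :
    gchoose ((a : ℤ) + (j + m + N : ℕ) - 1) (m + (N - t)) *
      gchoose ((b : ℤ) + (j + m + N : ℕ) - 1) (j + t) *
      Ac a (j + t) j * Ac b (m + (N - t)) m
    = (N.choose t : ℂ) * Kbig a b j m N := by
  set u := N - t with hu
  have htu : t + u = N := by omega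
  set w := j + m + N with hw
  -- complex casts of the tops
  have hA : (((a : ℤ) + (w : ℕ) - 1 : ℤ) : ℂ) = (a : ℂ) + (w : ℕ) - 1 := by push_cast; ring
  have hB : (((b : ℤ) + (w : ℕ) - 1 : ℤ) : ℂ) = (b : ℂ) + (w : ℕ) - 1 := by push_cast; ring
  -- split the gchoose products
  have hsplitA : ∏ i ∈ Finset.range (m + u), (((a : ℂ) + (w : ℕ) - 1) - i)
      = (∏ i ∈ Finset.range m, ((a : ℂ) + (w : ℕ) - 1 - i)) *
        ∏ i ∈ Finset.range u, ((a : ℂ) + (j + t : ℕ) + i) := by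
    rw [Finset.prod_range_add]
    congr 1
    rw [← Finset.prod_range_reflect]
    apply Finset.prod_congr rfl
    intro i hi
    have hiu : i < u := Finset.mem_range.mp hi
    have h1 : ((m + (u - 1 - i) : ℕ) : ℂ) = (m : ℂ) + u - 1 - i := by
      push_cast [Nat.cast_sub (by omega : i ≤ u - 1), Nat.cast_sub (by omega : 1 ≤ u)]
      ring
    rw [h1]
    have h2 : ((w : ℕ) : ℂ) = (j : ℂ) + m + N := by rw [hw]; push_cast; ring
    have h3 : ((j + t : ℕ) : ℂ) = (j : ℂ) + t := by push_cast; ring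
    have h4 : ((N : ℕ) : ℂ) = (t : ℂ) + u := by rw [← htu]; push_cast; ring
    rw [h2, h3]
    rw [h4]
    ring
  have hsplitB : ∏ i ∈ Finset.range (j + t), (((b : ℂ) + (w : ℕ) - 1) - i)
      = (∏ i ∈ Finset.range j, ((b : ℂ) + (w : ℕ) - 1 - i)) *
        ∏ i ∈ Finset.range t, ((b : ℂ) + (m + u : ℕ) + i) := by
    rw [Finset.prod_range_add]
    congr 1
    rw [← Finset.prod_range_reflect]
    apply Finset.prod_congr rfl
    intro i hi
    have hit : i < t := Finset.mem_range.mp hi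
    have h1 : ((j + (t - 1 - i) : ℕ) : ℂ) = (j : ℂ) + t - 1 - i := by
      push_cast [Nat.cast_sub (by omega : i ≤ t - 1), Nat.cast_sub (by omega : 1 ≤ t)]
      ring
    rw [h1]
    have h2 : ((w : ℕ) : ℂ) = (j : ℂ) + m + N := by rw [hw]; push_cast; ring
    have h3 : ((m + u : ℕ) : ℂ) = (m : ℂ) + u := by push_cast; ring
    have h4 : ((N : ℕ) : ℂ) = (t : ℂ) + u := by rw [← htu]; push_cast; ring
    rw [h2, h3, h4]
    ring
  -- join the Ico products
  have hjoinA : ∏ i ∈ Finset.Ico j (j + N), ((a : ℂ) + i)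
      = (∏ i ∈ Finset.Ico j (j + t), ((a : ℂ) + i)) *
        ∏ i ∈ Finset.range u, ((a : ℂ) + (j + t : ℕ) + i) := by
    rw [← Finset.prod_Ico_consecutive _ (by omega : j ≤ j + t) (by omega : j + t ≤ j + N)]
    congr 1
    rw [Finset.prod_Ico_eq_prod_range]
    have : j + N - (j + t) = u := by omega
    rw [this]
    apply Finset.prod_congr rfl
    intro i _
    push_cast
    ring
  have hjoinB : ∏ i ∈ Finset.Ico m (m + N), ((b : ℂ) + i)
      = (∏ i ∈ Finset.Ico m (m + u), ((b : ℂ) + i)) *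
        ∏ i ∈ Finset.range t, ((b : ℂ) + (m + u : ℕ) + i) := by
    rw [← Finset.prod_Ico_consecutive _ (by omega : m ≤ m + u) (by omega : m + u ≤ m + N)]
    congr 1
    rw [Finset.prod_Ico_eq_prod_range]
    have : m + N - (m + u) = t := by omega
    rw [this]
    apply Finset.prod_congr rfl
    intro i _
    push_cast
    ring
  -- factorial identities
  have hfac1 : ((j + t).factorial : ℂ) = ((j + t).choose j : ℂ) * (j.factorial : ℂ) * (t.factorial : ℂ) := by
    have := Nat.choose_mul_factorial_mul_factorial (by omega : j ≤ j + t)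
    have h : j + t - j = t := by omega
    rw [h] at this
    exact_mod_cast congrArg (fun x : ℕ => (x : ℂ)) this.symm
  have hfac2 : ((m + u).factorial : ℂ) = ((m + u).choose m : ℂ) * (m.factorial : ℂ) * (u.factorial : ℂ) := by
    have := Nat.choose_mul_factorial_mul_factorial (by omega : m ≤ m + u)
    have h : m + u - m = u := by omega
    rw [h] at this
    exact_mod_cast congrArg (fun x : ℕ => (x : ℂ)) this.symm
  have hfac3 : (N.factorial : ℂ) = (N.choose t : ℂ) * (t.factorial : ℂ) * (u.factorial : ℂ) := by
    have := Nat.choose_mul_factorial_mul_factorial ht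
    rw [← hu] at this
    exact_mod_cast congrArg (fun x : ℕ => (x : ℂ)) this.symm
  -- nonzero denominators
  have hjf : (j.factorial : ℂ) ≠ 0 := Nat.cast_ne_zero.mpr j.factorial_ne_zero
  have hmf : (m.factorial : ℂ) ≠ 0 := Nat.cast_ne_zero.mpr m.factorial_ne_zero
  have htf : (t.factorial : ℂ) ≠ 0 := Nat.cast_ne_zero.mpr t.factorial_ne_zero
  have huf : (u.factorial : ℂ) ≠ 0 := Nat.cast_ne_zero.mpr u.factorial_ne_zero
  have hNf : (N.factorial : ℂ) ≠ 0 := Nat.cast_ne_zero.mpr N.factorial_ne_zero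
  have hc1 : ((j + t).choose j : ℂ) ≠ 0 :=
    Nat.cast_ne_zero.mpr (Nat.choose_pos (by omega : j ≤ j + t)).ne'
  have hc2 : ((m + u).choose m : ℂ) ≠ 0 :=
    Nat.cast_ne_zero.mpr (Nat.choose_pos (by omega : m ≤ m + u)).ne'
  have hcN : ((N.choose t : ℕ) : ℂ) ≠ 0 := Nat.cast_ne_zero.mpr (Nat.choose_pos ht).ne'
  rw [gchoose, gchoose, Ac, Ac, Kbig]
  rw [hA, hB, hsplitA, hsplitB, hjoinA, hjoinB, hfac1, hfac2, hfac3]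
  set P1 := ∏ i ∈ Finset.range m, ((a : ℂ) + (w : ℕ) - 1 - (i : ℂ)) with hP1
  set P2 := ∏ i ∈ Finset.range j, ((b : ℂ) + (w : ℕ) - 1 - (i : ℂ)) with hP2
  set P3 := ∏ i ∈ Finset.range u, ((a : ℂ) + ((j + t : ℕ) : ℂ) + (i : ℂ)) with hP3
  set P4 := ∏ i ∈ Finset.range t, ((b : ℂ) + ((m + u : ℕ) : ℂ) + (i : ℂ)) with hP4
  set P5 := ∏ i ∈ Finset.Ico j (j + t), ((a : ℂ) + (i : ℂ)) with hP5
  set P6 := ∏ i ∈ Finset.Ico m (m + u), ((b : ℂ) + (i : ℂ)) with hP6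
  field_simp

lemma alt_sum_choose_zero {N : ℕ} (hN : 1 ≤ N) :
    ∑ t ∈ Finset.range (N + 1), (-1 : ℂ) ^ t * (N.choose t : ℂ) = 0 := by
  have h := Int.alternating_sum_range_choose (n := N)
  rw [if_neg (by omega)] at h
  have := congrArg (fun x : ℤ => (x : ℂ)) h
  push_cast at this
  simpa using this

lemma keySum (a b j m N : ℕ) (hN : 1 ≤ N) :
    ∑ t ∈ Finset.range (N + 1),
      (-1 : ℂ) ^ (j + t) *
        (gchoose ((a : ℤ) + (j + m + N : ℕ) - 1) (m + (N - t)) *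
          gchoose ((b : ℤ) + (j + m + N : ℕ) - 1) (j + t) *
          Ac a (j + t) j * Ac b (m + (N - t)) m) = 0 := by
  have hcong : ∀ t ∈ Finset.range (N + 1),
      (-1 : ℂ) ^ (j + t) *
        (gchoose ((a : ℤ) + (j + m + N : ℕ) - 1) (m + (N - t)) *
          gchoose ((b : ℤ) + (j + m + N : ℕ) - 1) (j + t) *
          Ac a (j + t) j * Ac b (m + (N - t)) m)
      = ((-1 : ℂ) ^ j * Kbig a b j m N) * ((-1 : ℂ) ^ t * (N.choose t : ℂ)) := by
    intro t ht
    rw [keyP a b j m N t (Finset.mem_range_succ_iff.mp ht), pow_add]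
    ring
  rw [Finset.sum_congr rfl hcong, ← Finset.mul_sum, alt_sum_choose_zero hN, mul_zero]

lemma sum_dotProduct' {α : Type*} (s : Finset α) (f : α → Fin n → ℂ) (g : Fin n → ℂ) :
    (∑ r ∈ s, f r) ⬝ᵥ g = ∑ r ∈ s, f r ⬝ᵥ g := by
  simp only [dotProduct, Finset.sum_apply, Finset.sum_mul]
  rw [Finset.sum_comm]

lemma dotProduct_sum' {α : Type*} (s : Finset α) (g : Fin n → ℂ) (f : α → Fin n → ℂ) :
    g ⬝ᵥ (∑ r ∈ s, f r) = ∑ r ∈ s, g ⬝ᵥ f r := by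
  simp only [dotProduct, Finset.sum_apply, Finset.mul_sum]
  rw [Finset.sum_comm]

/-- If φ ∈ M̂_α(Γ, ρ) and ψ ∈ M̂_β(Γ, ρ*) with ρ* the contragredient, then
[[φ,ψ]]_w = Σ_{r=0}^w (−1)^r C(α+w−1, w−r) C(β+w−1, r) ᵗ(φ⁽ʳ⁾) ψ⁽ʷ⁻ʳ⁾
is a scalar modular form of weight α+β+2w for Γ. -/
theorem rankin_cohen_pairing (n : ℕ) (Γ : Subgroup SL2R)
    (ρ : SL2R → Matrix (Fin n) (Fin n) ℝ)
    (hρinv : ∀ γ : SL2R, IsUnit (ρ γ).det)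
    (a b w : ℕ) (φ ψ : ℂ → Fin n → ℂ)
    (hφ : IsVVMF Γ ρ (a : ℤ) φ)
    (hψ : IsVVMF Γ (fun γ => ((ρ γ)ᵀ)⁻¹) (b : ℤ) ψ) :
    IsMF Γ ((a : ℤ) + b + 2 * w)
      (fun z => ∑ r ∈ Finset.range (w + 1),
        (-1 : ℂ) ^ r * gchoose ((a : ℤ) + w - 1) (w - r) *
          gchoose ((b : ℤ) + w - 1) r *
          (iteratedDeriv r φ z ⬝ᵥ iteratedDeriv (w - r) ψ z)) := by
  obtain ⟨hφd, hφt⟩ := hφ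
  obtain ⟨hψd, hψt⟩ := hψ
  constructor
  · -- differentiability
    apply DifferentiableOn.fun_sum
    intro r _
    apply DifferentiableOn.mul
    · exact differentiableOn_const _
    · simp only [dotProduct]
      apply DifferentiableOn.fun_sum
      intro i _
      exact ((differentiableOn_pi.mp (iter_analytic hφd r).differentiableOn) i).mul
            ((differentiableOn_pi.mp (iter_analytic hψd (w - r)).differentiableOn) i)
  · intro γ hγ z hz
    beta_reduce
    have hJ := Jf_ne_zero γ hz
    set c : ℂ := ((γ.1 1 0 : ℝ) : ℂ) with hcdef
    have hφγ := deriv_transform γ a ((ρ γ).map Complex.ofReal) φ hφd (fun x hx => by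
      have h := hφt γ hγ x hx
      rwa [zpow_natCast] at h)
    have hψγ := deriv_transform γ b ((((ρ γ)ᵀ)⁻¹).map Complex.ofReal) ψ hψd (fun x hx => by
      have h := hψt γ hγ x hx
      rwa [zpow_natCast] at h)
    have hQQ : (((ρ γ).map (Complex.ofReal : ℝ → ℂ)))ᵀ * ((((ρ γ)ᵀ)⁻¹).map (Complex.ofReal : ℝ → ℂ)) = 1 := by
      have h1 : (ρ γ)ᵀ * ((ρ γ)ᵀ)⁻¹ = 1 :=
        Matrix.mul_nonsing_inv _ (by rw [Matrix.det_transpose]; exact hρinv γ)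
      have h2 : ((ρ γ)ᵀ * ((ρ γ)ᵀ)⁻¹).map (Complex.ofReal : ℝ → ℂ)
          = ((ρ γ)ᵀ).map (Complex.ofReal : ℝ → ℂ) * (((ρ γ)ᵀ)⁻¹).map (Complex.ofReal : ℝ → ℂ) :=
        Matrix.map_mul (f := Complex.ofRealHom)
      rw [← Matrix.transpose_map, ← h2, h1]
      ext i k
      simp [Matrix.map_apply, Matrix.one_apply]
      split <;> simp
    have hdot : ∀ x y : Fin n → ℂ,
        (((ρ γ).map Complex.ofReal *ᵥ x) ⬝ᵥ ((((ρ γ)ᵀ)⁻¹).map Complex.ofReal *ᵥ y)) = x ⬝ᵥ y := by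
      intro x y
      rw [← Matrix.vecMul_transpose, dotProduct_mulVec, Matrix.vecMul_vecMul, hQQ,
        Matrix.vecMul_one]
    have hrterm : ∀ r ∈ Finset.range (w + 1),
        (iteratedDeriv r φ (actSL γ z) ⬝ᵥ iteratedDeriv (w - r) ψ (actSL γ z))
        = ∑ j ∈ Finset.range (w + 1), ∑ m ∈ Finset.range (w + 1),
            (Ac a r j * c ^ (r - j) * Jf γ z ^ (a + r + j)) *
              ((Ac b (w - r) m * c ^ (w - r - m) * Jf γ z ^ (b + (w - r) + m)) *
                (iteratedDeriv j φ z ⬝ᵥ iteratedDeriv m ψ z)) := by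
      intro r hr
      have hrw : r ≤ w := Finset.mem_range_succ_iff.mp hr
      rw [hφγ r z hz, hψγ (w - r) z hz]
      have h1 : ∑ j ∈ Finset.range (r + 1),
            (Ac a r j * c ^ (r - j) * Jf γ z ^ (a + r + j)) •
              ((ρ γ).map Complex.ofReal *ᵥ iteratedDeriv j φ z)
          = ∑ j ∈ Finset.range (w + 1),
            (Ac a r j * c ^ (r - j) * Jf γ z ^ (a + r + j)) •
              ((ρ γ).map Complex.ofReal *ᵥ iteratedDeriv j φ z) := by
        apply Finset.sum_subset (Finset.range_subset_range.mpr (by omega))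
        intro x hx hxn
        have hlt : r < x := by
          simp only [Finset.mem_range] at hx hxn
          omega
        rw [Ac_zero_of_lt a hlt, zero_mul, zero_mul, zero_smul]
      have h2 : ∑ m ∈ Finset.range (w - r + 1),
            (Ac b (w - r) m * c ^ (w - r - m) * Jf γ z ^ (b + (w - r) + m)) •
              ((((ρ γ)ᵀ)⁻¹).map Complex.ofReal *ᵥ iteratedDeriv m ψ z)
          = ∑ m ∈ Finset.range (w + 1),
            (Ac b (w - r) m * c ^ (w - r - m) * Jf γ z ^ (b + (w - r) + m)) •
              ((((ρ γ)ᵀ)⁻¹).map Complex.ofReal *ᵥ iteratedDeriv m ψ z) := by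
        apply Finset.sum_subset (Finset.range_subset_range.mpr (by omega))
        intro x hx hxn
        have hlt : w - r < x := by
          simp only [Finset.mem_range] at hx hxn
          omega
        rw [Ac_zero_of_lt b hlt, zero_mul, zero_mul, zero_smul]
      rw [h1, h2, sum_dotProduct']
      apply Finset.sum_congr rfl
      intro j _
      rw [dotProduct_sum']
      apply Finset.sum_congr rfl
      intro m _
      rw [smul_dotProduct, dotProduct_smul, hdot, smul_eq_mul, smul_eq_mul]
    -- the full triple-sum term
    set TT : ℕ → ℕ → ℕ → ℂ := fun r j m =>
      ((-1 : ℂ) ^ r * gchoose ((a : ℤ) + w - 1) (w - r) * gchoose ((b : ℤ) + w - 1) r) *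
        ((Ac a r j * c ^ (r - j) * Jf γ z ^ (a + r + j)) *
          ((Ac b (w - r) m * c ^ (w - r - m) * Jf γ z ^ (b + (w - r) + m)) *
            (iteratedDeriv j φ z ⬝ᵥ iteratedDeriv m ψ z))) with hTT
    -- vanishing off the diagonal
    have hvanish : ∀ j ∈ Finset.range (w + 1), ∀ m ∈ Finset.range (w + 1), j + m ≠ w →
        ∑ r ∈ Finset.range (w + 1), TT r j m = 0 := by
      intro j hj m hm hne
      have hjw : j ≤ w := Finset.mem_range_succ_iff.mp hj
      have hmw : m ≤ w := Finset.mem_range_succ_iff.mp hm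
      rcases lt_or_gt_of_ne hne with hlt | hgt
      · -- j + m < w : key cancellation
        set N : ℕ := w - j - m with hN
        have hN1 : 1 ≤ N := by omega
        have hwN : w = j + m + N := by omega
        have hsub : ∑ r ∈ Finset.range (w + 1), TT r j m
            = ∑ r ∈ Finset.Ico j (j + N + 1), TT r j m := by
          symm
          apply Finset.sum_subset
          · intro x hx
            rw [Finset.mem_range]
            rw [Finset.mem_Ico] at hx
            omega
          · intro x hx hxn
            rw [Finset.mem_range] at hx
            rw [Finset.mem_Ico] at hxn
            rcases lt_or_ge x j with h' | h'
            · simp [hTT, Ac_zero_of_lt a h']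
            · have h'' : w - x < m := by omega
              simp [hTT, Ac_zero_of_lt b h'']
        rw [hsub, Finset.sum_Ico_eq_sum_range]
        have hNN : j + N + 1 - j = N + 1 := by omega
        rw [hNN]
        have hterm3 : ∀ t ∈ Finset.range (N + 1), TT (j + t) j m
            = ((-1 : ℂ) ^ (j + t) *
                (gchoose ((a : ℤ) + (j + m + N : ℕ) - 1) (m + (N - t)) *
                  gchoose ((b : ℤ) + (j + m + N : ℕ) - 1) (j + t) *
                  Ac a (j + t) j * Ac b (m + (N - t)) m)) *
              (c ^ N * Jf γ z ^ (a + b + w + j + m) *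
                (iteratedDeriv j φ z ⬝ᵥ iteratedDeriv m ψ z)) := by
          intro t ht'
          have htN : t ≤ N := Finset.mem_range_succ_iff.mp ht'
          have e1 : w - (j + t) = m + (N - t) := by omega
          have e2 : j + t - j = t := by omega
          have e3 : w - (j + t) - m = N - t := by omega
          have e4 : ((a : ℤ) + w - 1) = ((a : ℤ) + (j + m + N : ℕ) - 1) := by rw [hwN]
          have e5 : ((b : ℤ) + w - 1) = ((b : ℤ) + (j + m + N : ℕ) - 1) := by rw [hwN]
          have hc5 : c ^ N = c ^ t * c ^ (N - t) := by
            rw [← pow_add]; congr 1; omega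
          have hJ5 : Jf γ z ^ (a + b + w + j + m)
              = Jf γ z ^ (a + (j + t) + j) * Jf γ z ^ (b + (m + (N - t)) + m) := by
            rw [← pow_add]; congr 1; omega
          rw [hTT]
          simp only []
          rw [e3, e1, e2, e4, e5, hc5, hJ5]
          ring
        rw [Finset.sum_congr rfl hterm3, ← Finset.sum_mul, keySum a b j m N hN1, zero_mul]
      · -- j + m > w : every term vanishes
        apply Finset.sum_eq_zero
        intro r hr
        have hrw : r ≤ w := Finset.mem_range_succ_iff.mp hr
        rcases le_or_gt j r with h' | h'
        · have h'' : w - r < m := by omega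
          simp [hTT, Ac_zero_of_lt b h'']
        · simp [hTT, Ac_zero_of_lt a h']
    -- diagonal value
    have hdiag : ∀ j ∈ Finset.range (w + 1),
        ∑ r ∈ Finset.range (w + 1), TT r j (w - j)
        = Jf γ z ^ (a + b + 2 * w) *
            ((-1 : ℂ) ^ j * gchoose ((a : ℤ) + w - 1) (w - j) * gchoose ((b : ℤ) + w - 1) j *
              (iteratedDeriv j φ z ⬝ᵥ iteratedDeriv (w - j) ψ z)) := by
      intro j hj
      have hjw : j ≤ w := Finset.mem_range_succ_iff.mp hj
      rw [Finset.sum_eq_single j]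
      · rw [hTT]
        simp only []
        rw [Ac_self a j, Ac_self b (w - j), Nat.sub_self, Nat.sub_self, pow_zero]
        have hJm : Jf γ z ^ (a + j + j) * Jf γ z ^ (b + (w - j) + (w - j))
            = Jf γ z ^ (a + b + 2 * w) := by
          rw [← pow_add]; congr 1; omega
        rw [← hJm]
        ring
      · intro r hr hne
        have hrw : r ≤ w := Finset.mem_range_succ_iff.mp hr
        rcases lt_or_gt_of_ne hne with h' | h'
        · simp [hTT, Ac_zero_of_lt a h']
        · have h'' : w - r < w - j := by omega
          simp [hTT, Ac_zero_of_lt b h'']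
      · intro hnot
        exact absurd hj hnot
    have hzpow : Jf γ z ^ ((a : ℤ) + b + 2 * w) = Jf γ z ^ (a + b + 2 * w : ℕ) := by
      rw [show ((a : ℤ) + b + 2 * w) = ((a + b + 2 * w : ℕ) : ℤ) by push_cast; ring, zpow_natCast]
    rw [hzpow]
    calc ∑ r ∈ Finset.range (w + 1),
          (-1 : ℂ) ^ r * gchoose ((a : ℤ) + w - 1) (w - r) * gchoose ((b : ℤ) + w - 1) r *
            (iteratedDeriv r φ (actSL γ z) ⬝ᵥ iteratedDeriv (w - r) ψ (actSL γ z))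
        = ∑ r ∈ Finset.range (w + 1), ∑ j ∈ Finset.range (w + 1), ∑ m ∈ Finset.range (w + 1),
            TT r j m := by
          apply Finset.sum_congr rfl
          intro r hr
          rw [hrterm r hr, Finset.mul_sum]
          apply Finset.sum_congr rfl
          intro j _
          rw [Finset.mul_sum]
      _ = ∑ j ∈ Finset.range (w + 1), ∑ m ∈ Finset.range (w + 1), ∑ r ∈ Finset.range (w + 1),
            TT r j m := by
          rw [Finset.sum_comm]
          apply Finset.sum_congr rfl
          intro j _
          rw [Finset.sum_comm]
      _ = ∑ j ∈ Finset.range (w + 1), Jf γ z ^ (a + b + 2 * w) *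
            ((-1 : ℂ) ^ j * gchoose ((a : ℤ) + w - 1) (w - j) * gchoose ((b : ℤ) + w - 1) j *
              (iteratedDeriv j φ z ⬝ᵥ iteratedDeriv (w - j) ψ z)) := by
          apply Finset.sum_congr rfl
          intro j hj
          have hjw : j ≤ w := Finset.mem_range_succ_iff.mp hj
          rw [Finset.sum_eq_single (w - j)]
          · exact hdiag j hj
          · intro m hm hne
            exact hvanish j hj m hm (by omega)
          · intro hnot
            exact absurd (Finset.mem_range_succ_iff.mpr (by omega)) hnot
      _ = Jf γ z ^ (a + b + 2 * w) * ∑ r ∈ Finset.range (w + 1),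
            (-1 : ℂ) ^ r * gchoose ((a : ℤ) + w - 1) (w - r) * gchoose ((b : ℤ) + w - 1) r *
              (iteratedDeriv r φ z ⬝ᵥ iteratedDeriv (w - r) ψ z) := by
          rw [← Finset.mul_sum]
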